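/- The value V_t^a[λ](n^B, n^G) is a 1-Lipschitz (in the ℓ¹ norm) function of λ restricted to coordinates (λ_t, ..., λ_{T-1}): |V_t^a[λ](n^B,n^G) - V_t^a[λ'](n^B,n^G)| ≤ Σ_{s=t}^{T-1} |λ_s - λ'_s|. -/

import Mathlib

/-- Per-arm dual Bellman value function `V_t^a[λ]`, indexed by remaining fuel
`k = T - t`, current time `t`, and Beta-posterior counts `(n^B, n^G)`.
Outcomes: `false = B`, `true = G`. -/
noncomputable def Vdual (r : ℕ → Bool → ℝ) (lam : ℕ → ℝ) : ℕ → ℕ → ℕ → ℕ → ℝ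
  | 0, _, _, _ => 0
  | k + 1, t, nB, nG =>
      max (Vdual r lam k (t + 1) nB nG)
        (-lam t
          + (nB : ℝ) / (nB + nG) * (r t false + Vdual r lam k (t + 1) (nB + 1) nG)
          + (nG : ℝ) / (nB + nG) * (r t true + Vdual r lam k (t + 1) nB (nG + 1)))

lemma Vdual_lip_aux (r : ℕ → Bool → ℝ) (lam lam' : ℕ → ℝ) :
    ∀ k t nB nG, 1 ≤ nB → 1 ≤ nG →
    |Vdual r lam k t nB nG - Vdual r lam' k t nB nG| ≤
      ∑ s ∈ Finset.Ico t (t + k), |lam s - lam' s| := by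
  intro k
  induction k with
  | zero => intro t nB nG _ _; simp [Vdual]
  | succ k ih =>
    intro t nB nG hB hG
    have hS : (0:ℝ) < (nB : ℝ) + nG := by positivity
    set p : ℝ := (nB : ℝ) / (nB + nG) with hp
    set q : ℝ := (nG : ℝ) / (nB + nG) with hq
    have hp0 : 0 ≤ p := by positivity
    have hq0 : 0 ≤ q := by positivity
    have hpq : p + q = 1 := by
      rw [hp, hq, ← add_div, div_self hS.ne']
    have hsum : ∑ s ∈ Finset.Ico t (t + (k+1)), |lam s - lam' s|
        = |lam t - lam' t| + ∑ s ∈ Finset.Ico (t+1) (t + 1 + k), |lam s - lam' s| := by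
      rw [show t + (k+1) = t + 1 + k by omega, Finset.sum_eq_sum_Ico_succ_bot (by omega)]
    have ihA := ih (t+1) nB nG hB hG
    have ihB := ih (t+1) (nB+1) nG (by omega) hG
    have ihC := ih (t+1) nB (nG+1) hB (by omega)
    set S := ∑ s ∈ Finset.Ico (t+1) (t + 1 + k), |lam s - lam' s| with hSdef
    have hS0 : 0 ≤ S := Finset.sum_nonneg (fun _ _ => abs_nonneg _)
    rw [hsum]
    show |Vdual r lam (k+1) t nB nG - Vdual r lam' (k+1) t nB nG| ≤ _
    simp only [Vdual]
    refine (abs_max_sub_max_le_max _ _ _ _).trans (max_le ?_ ?_)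
    · calc |Vdual r lam k (t + 1) nB nG - Vdual r lam' k (t + 1) nB nG| ≤ S := ihA
        _ ≤ |lam t - lam' t| + S := by linarith [abs_nonneg (lam t - lam' t)]
    · have key : (-lam t + p * (r t false + Vdual r lam k (t + 1) (nB + 1) nG)
            + q * (r t true + Vdual r lam k (t + 1) nB (nG + 1)))
          - (-lam' t + p * (r t false + Vdual r lam' k (t + 1) (nB + 1) nG)
            + q * (r t true + Vdual r lam' k (t + 1) nB (nG + 1)))
          = (lam' t - lam t)
            + p * (Vdual r lam k (t + 1) (nB + 1) nG - Vdual r lam' k (t + 1) (nB + 1) nG)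
            + q * (Vdual r lam k (t + 1) nB (nG + 1) - Vdual r lam' k (t + 1) nB (nG + 1)) := by
        ring
      rw [key]
      calc |(lam' t - lam t)
            + p * (Vdual r lam k (t + 1) (nB + 1) nG - Vdual r lam' k (t + 1) (nB + 1) nG)
            + q * (Vdual r lam k (t + 1) nB (nG + 1) - Vdual r lam' k (t + 1) nB (nG + 1))|
          ≤ |lam' t - lam t|
            + |p * (Vdual r lam k (t + 1) (nB + 1) nG - Vdual r lam' k (t + 1) (nB + 1) nG)|
            + |q * (Vdual r lam k (t + 1) nB (nG + 1) - Vdual r lam' k (t + 1) nB (nG + 1))| := by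
            exact (abs_add_le _ _).trans (by gcongr; exact abs_add_le _ _)
        _ ≤ |lam t - lam' t| + p * S + q * S := by
            rw [abs_sub_comm (lam' t)]
            gcongr
            · rw [abs_mul, abs_of_nonneg hp0]; exact mul_le_mul_of_nonneg_left ihB hp0
            · rw [abs_mul, abs_of_nonneg hq0]; exact mul_le_mul_of_nonneg_left ihC hq0
        _ = |lam t - lam' t| + S := by
            have : p * S + q * S = S := by rw [← add_mul, hpq, one_mul]
            linarith

/-- `V_t^a[λ]` is 1-Lipschitz in the ℓ¹ norm with respect to the
coordinates `(λ_t, …, λ_{T-1})` of the multiplier vector. -/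
theorem Vdual_lipschitz_in_multiplier (T : ℕ) (r : ℕ → Bool → ℝ) (lam lam' : ℕ → ℝ)
    (t : ℕ) (ht : t ≤ T) (nB nG : ℕ) (hB : 1 ≤ nB) (hG : 1 ≤ nG) :
    |Vdual r lam (T - t) t nB nG - Vdual r lam' (T - t) t nB nG| ≤
      ∑ s ∈ Finset.Ico t T, |lam s - lam' s| := by
  have := Vdual_lip_aux r lam lam' (T - t) t nB nG hB hG
  rwa [show t + (T - t) = T by omega] at this
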